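/- arXiv:2207.01069 — 4 statements merged into one kernel-verified Lean document; each statement's English description precedes it below -/
import Mathlib

section
/- Let α, β, δ, γ be linear maps on real sequences such that the matrix operator T(ω,x) = (αω + βx, δω + γx) is bounded on Z₂. Then γ + δ∘KP is bounded from ℓ² to ℓ²: there is a constant C′ > 0 such that for every y ∈ ℓ², γy + δ(KP y) ∈ ℓ² and ‖γy + δ(KP y)‖₂ ≤ C′‖y‖₂. -/
open scoped BigOperators

noncomputable section

/-- Real sequences. -/
abbrev RSeq : Type := ℕ → ℝ

/-- Membership in ℓ². -/
def memL2 (x : RSeq) : Prop := Summable (fun n => (x n) ^ 2)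

/-- The ℓ² norm. -/
noncomputable def l2norm (x : RSeq) : ℝ := Real.sqrt (∑' n, (x n) ^ 2)

/-- The Kalton–Peck map, defined coordinatewise.  (In Lean, `Real.log 0 = 0` and
division by zero is zero, so the conventions `0·log 0 = 0` and `KP 0 = 0` hold.) -/
noncomputable def KP (x : RSeq) : RSeq := fun n => 2 * x n * Real.log (|x n| / l2norm x)

/-- Membership in the Kalton–Peck space Z₂. -/
def memZ2 (u : RSeq × RSeq) : Prop := memL2 u.2 ∧ memL2 (u.1 - KP u.2)

/-- The Z₂ quasinorm. -/
noncomputable def Z2norm (u : RSeq × RSeq) : ℝ := l2norm (u.1 - KP u.2) + l2norm u.2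

/-- A map on pairs of sequences is bounded on Z₂. -/
def BoundedOnZ2 (T : RSeq × RSeq → RSeq × RSeq) : Prop :=
  (∀ u, memZ2 u → memZ2 (T u)) ∧ ∃ C : ℝ, ∀ u, memZ2 u → Z2norm (T u) ≤ C * Z2norm u

/-- The matrix operator associated to four linear maps on sequences. -/
def matOp (α β δ γ : RSeq →ₗ[ℝ] RSeq) : RSeq × RSeq → RSeq × RSeq :=
  fun u => (α u.1 + β u.2, δ u.1 + γ u.2)

/-- Membership in the Orlicz space ℓ_f = Dom KP. -/
def memLf (x : RSeq) : Prop := memL2 x ∧ memL2 (KP x)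

/-- The ℓ_f quasinorm. -/
noncomputable def lfNorm (x : RSeq) : ℝ := l2norm (KP x) + l2norm x

/-- Membership in ℓ_f* = Ran KP. -/
def memLfStar (ω : RSeq) : Prop := ∃ x : RSeq, memL2 x ∧ memL2 (ω - KP x)

/-- The ℓ_f* quasinorm. -/
noncomputable def lfStarNorm (ω : RSeq) : ℝ :=
  sInf {r : ℝ | ∃ x : RSeq, memL2 x ∧ memL2 (ω - KP x) ∧ r = l2norm (ω - KP x) + l2norm x}

/-- A bounded map on Z₂ is strictly singular if every linear subspace of Z₂ on which it is
bounded below is finite dimensional. -/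
def StrictlySingular (T : RSeq × RSeq → RSeq × RSeq) : Prop :=
  ∀ V : Submodule ℝ (RSeq × RSeq), (∀ v ∈ V, memZ2 v) →
    (∃ c > 0, ∀ v ∈ V, c * Z2norm v ≤ Z2norm (T v)) → FiniteDimensional ℝ V

/-- A set of sequences is totally bounded (relatively compact) for the ℓ² norm. -/
def l2TotallyBounded (A : Set RSeq) : Prop :=
  ∀ ε > 0, ∃ S : Set RSeq, S.Finite ∧
    ∀ a ∈ A, ∃ s ∈ S, memL2 (a - s) ∧ l2norm (a - s) < ε

/-- A map on Z₂ is compact if the image of the unit ball is totally bounded for the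
Z₂ quasinorm. -/
def CompactOnZ2 (T : RSeq × RSeq → RSeq × RSeq) : Prop :=
  ∀ ε > 0, ∃ S : Set (RSeq × RSeq), S.Finite ∧
    ∀ u, memZ2 u → Z2norm u ≤ 1 → ∃ s ∈ S, memZ2 (T u - s) ∧ Z2norm (T u - s) < ε

/-- If the matrix operator is bounded on Z₂, then γ + δ∘KP is bounded from
ℓ² to ℓ². -/
theorem stmt_2 (α β δ γ : RSeq →ₗ[ℝ] RSeq)
    (hT : BoundedOnZ2 (matOp α β δ γ)) :
    ∃ C > (0 : ℝ), ∀ y : RSeq, memL2 y →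
      memL2 (γ y + δ (KP y)) ∧ l2norm (γ y + δ (KP y)) ≤ C * l2norm y := by
  obtain ⟨hmem, C, hC⟩ := hT
  refine ⟨|C| + 1, by positivity, fun y hy => ?_⟩
  set u : RSeq × RSeq := (KP y, y) with hu_def
  have hzero : u.1 - KP u.2 = 0 := by simp [hu_def]
  have hu : memZ2 u := by
    refine ⟨hy, ?_⟩
    rw [hzero]
    show Summable fun n => ((0 : RSeq) n) ^ 2
    simpa using (summable_zero : Summable (fun _ : ℕ => (0 : ℝ)))
  have hTu := hmem u hu
  have hkey : (matOp α β δ γ u).2 = γ y + δ (KP y) := by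
    simp [matOp, hu_def, add_comm]
  have hmem2 : memL2 (γ y + δ (KP y)) := by
    rw [← hkey]; exact hTu.1
  refine ⟨hmem2, ?_⟩
  have hZu : Z2norm u = l2norm y := by
    have : l2norm (u.1 - KP u.2) = 0 := by
      rw [hzero]
      show Real.sqrt (∑' n, ((0 : RSeq) n) ^ 2) = 0
      simp
    have hl0 : l2norm (0 : RSeq) = 0 := by
      show Real.sqrt (∑' n, ((0 : RSeq) n) ^ 2) = 0
      simp
    simp [Z2norm, this, hu_def, hl0]
  have h1 : l2norm (γ y + δ (KP y)) ≤ Z2norm (matOp α β δ γ u) := by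
    rw [← hkey, Z2norm]
    have := Real.sqrt_nonneg (∑' n, (((matOp α β δ γ u).1 - KP (matOp α β δ γ u).2) n) ^ 2)
    simp only [l2norm] at *
    linarith
  have h2 := hC u hu
  rw [hZu] at h2
  have h3 : C * l2norm y ≤ (|C| + 1) * l2norm y := by
    have hny : 0 ≤ l2norm y := Real.sqrt_nonneg _
    nlinarith [le_abs_self C]
  linarith
end
end

section
/- Let α, β, δ, γ be linear maps on real sequences such that the matrix operator T(ω,x) = (αω + βx, δω + γx) is bounded on Z₂. Then α is bounded from ℓ² to ℓ_f*: there is a constant C′ > 0 such that for every y ∈ ℓ², αy ∈ ℓ_f* and ‖αy‖_{ℓ_f*} ≤ C′‖y‖₂. -/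
open scoped BigOperators

noncomputable section

/-- If the matrix operator is bounded on Z₂, then α is bounded from ℓ² to ℓ_f*. -/
theorem stmt_3 (α β δ γ : RSeq →ₗ[ℝ] RSeq)
    (hT : BoundedOnZ2 (matOp α β δ γ)) :
    ∃ C > (0 : ℝ), ∀ y : RSeq, memL2 y →
      memLfStar (α y) ∧ lfStarNorm (α y) ≤ C * l2norm y := by
  obtain ⟨hmap, C, hC⟩ := hT
  refine ⟨max C 1, lt_of_lt_of_le one_pos (le_max_right _ _), fun y hy => ?_⟩
  have hKP0 : KP (0 : RSeq) = 0 := by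
    funext n; simp [KP]
  have hu : memZ2 ((y, (0 : RSeq))) := by
    constructor
    · simpa [memL2] using (summable_zero : Summable (fun _ : ℕ => (0:ℝ)))
    · simpa [hKP0, memL2] using hy
  have hTu : matOp α β δ γ (y, 0) = (α y, δ y) := by
    simp [matOp]
  have hmem := hmap _ hu
  rw [hTu] at hmem
  obtain ⟨h1, h2⟩ := hmem
  have hstar : memLfStar (α y) := ⟨δ y, h1, h2⟩
  refine ⟨hstar, ?_⟩
  have hl2nonneg : ∀ x : RSeq, 0 ≤ l2norm x := fun x => Real.sqrt_nonneg _
  have hbdd : BddBelow {r : ℝ | ∃ x : RSeq, memL2 x ∧ memL2 (α y - KP x) ∧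
      r = l2norm (α y - KP x) + l2norm x} := by
    refine ⟨0, fun r hr => ?_⟩
    obtain ⟨x, _, _, rfl⟩ := hr
    exact add_nonneg (hl2nonneg _) (hl2nonneg _)
  have hmemset : l2norm (α y - KP (δ y)) + l2norm (δ y) ∈
      {r : ℝ | ∃ x : RSeq, memL2 x ∧ memL2 (α y - KP x) ∧
        r = l2norm (α y - KP x) + l2norm x} := ⟨δ y, h1, h2, rfl⟩
  have h3 : lfStarNorm (α y) ≤ l2norm (α y - KP (δ y)) + l2norm (δ y) :=
    csInf_le hbdd hmemset
  have hZu : Z2norm ((y, (0 : RSeq))) = l2norm y := by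
    have : l2norm (0 : RSeq) = 0 := by
      simp [l2norm]
    simp [Z2norm, hKP0, this]
  have h4 := hC _ hu
  rw [hTu, hZu] at h4
  have h5 : Z2norm (α y, δ y) = l2norm (α y - KP (δ y)) + l2norm (δ y) := rfl
  rw [h5] at h4
  calc lfStarNorm (α y) ≤ C * l2norm y := h3.trans h4
    _ ≤ max C 1 * l2norm y := mul_le_mul_of_nonneg_right (le_max_left _ _) (hl2nonneg y)
end
end

section
/- Let α, β, δ, γ be linear maps on real sequences such that the matrix operator T(ω,x) = (αω + βx, δω + γx) is bounded on Z₂. Then α∘KP + β − KP∘(δ∘KP + γ) is bounded from ℓ² to ℓ²: there is a constant C′ > 0 such that for every y ∈ ℓ², δ(KP y) + γy ∈ ℓ², α(KP y) + βy − KP(δ(KP y) + γy) ∈ ℓ², and ‖α(KP y) + βy − KP(δ(KP y) + γy)‖₂ ≤ C′‖y‖₂. -/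
open scoped BigOperators

noncomputable section

/-- If the matrix operator is bounded on Z₂, then
α∘KP + β − KP∘(δ∘KP + γ) is bounded from ℓ² to ℓ². -/
theorem stmt_5 (α β δ γ : RSeq →ₗ[ℝ] RSeq)
    (hT : BoundedOnZ2 (matOp α β δ γ)) :
    ∃ C > (0 : ℝ), ∀ y : RSeq, memL2 y →
      memL2 (δ (KP y) + γ y) ∧
      memL2 (α (KP y) + β y - KP (δ (KP y) + γ y)) ∧
      l2norm (α (KP y) + β y - KP (δ (KP y) + γ y)) ≤ C * l2norm y := by
  obtain ⟨hmem, C, hC⟩ := hT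
  refine ⟨max C 1, lt_of_lt_of_le one_pos (le_max_right _ _), fun y hy => ?_⟩
  have hz : memL2 ((KP y, y).1 - KP (KP y, y).2) := by
    simp only [sub_self]
    simpa [memL2] using (summable_zero : Summable (fun _ : ℕ => (0:ℝ)))
  have hu : memZ2 (KP y, y) := ⟨hy, hz⟩
  have h1 := hmem _ hu
  have h2 := hC _ hu
  simp only [matOp, memZ2] at h1
  refine ⟨h1.1, h1.2, ?_⟩
  have hZu : Z2norm (KP y, y) = l2norm y := by
    have : l2norm ((KP y, y).1 - KP (KP y, y).2) = 0 := by
      simp [sub_self, l2norm]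
    simp only [Z2norm, sub_self] at this ⊢
    rw [this, zero_add]
  have hle : l2norm (α (KP y) + β y - KP (δ (KP y) + γ y))
      ≤ Z2norm (matOp α β δ γ (KP y, y)) := by
    simp only [matOp, Z2norm]
    exact le_add_of_nonneg_right (Real.sqrt_nonneg _)
  calc l2norm (α (KP y) + β y - KP (δ (KP y) + γ y))
      ≤ C * l2norm y := by rw [hZu] at h2; exact hle.trans h2
    _ ≤ max C 1 * l2norm y :=
        mul_le_mul_of_nonneg_right (le_max_left _ _) (Real.sqrt_nonneg _)
end
end

section
/- Let α, β, δ, γ be linear maps on real sequences such that the matrix operator T(ω,x) = (αω + βx, δω + γx) is bounded on Z₂, and suppose in addition that γ restricts to a bounded operator on ℓ² (for every y ∈ ℓ², γy ∈ ℓ² and ‖γy‖₂ ≤ K‖y‖₂ for some constant K). Then δ is bounded from ℓ_f* to ℓ² (there is C′ > 0 such that for every ω ∈ ℓ_f*, δω ∈ ℓ² and ‖δω‖₂ ≤ C′‖ω‖_{ℓ_f*}), and consequently δ∘KP is bounded on ℓ² (for every y ∈ ℓ², δ(KP y) ∈ ℓ² and ‖δ(KP y)‖₂ ≤ C′‖y‖₂).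 -/
open scoped BigOperators

noncomputable section

lemma toReal_two' : ((2:ENNReal)).toReal = 2 := by simp

lemma memL2_iff {x : RSeq} : memL2 x ↔ Memℓp x 2 := by
  rw [memℓp_gen_iff (by rw [toReal_two']; norm_num)]
  unfold memL2
  refine summable_congr (fun n => ?_)
  rw [toReal_two', Real.rpow_two, Real.norm_eq_abs, sq_abs]

lemma l2norm_eq {x : RSeq} (h : memL2 x) :
    l2norm x = ‖(⟨x, memL2_iff.mp h⟩ : lp (fun _ : ℕ => ℝ) 2)‖ := by
  have h2 : (0:ℝ) < (2:ENNReal).toReal := by rw [toReal_two']; norm_num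
  have key := lp.norm_rpow_eq_tsum h2 (⟨x, memL2_iff.mp h⟩ : lp (fun _ : ℕ => ℝ) 2)
  rw [toReal_two'] at key
  have : ∑' n, ‖x n‖ ^ (2:ℝ) = ∑' n, (x n)^2 := by
    refine tsum_congr fun n => ?_
    rw [Real.rpow_two, Real.norm_eq_abs, sq_abs]
  rw [this] at key
  unfold l2norm
  rw [← key, Real.rpow_two, Real.sqrt_sq (norm_nonneg _)]

lemma l2norm_nonneg (x : RSeq) : 0 ≤ l2norm x := Real.sqrt_nonneg _

lemma memL2_neg {x : RSeq} (h : memL2 x) : memL2 (-x) := by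
  unfold memL2 at *; simpa [neg_sq] using h

lemma memL2_add {x y : RSeq} (hx : memL2 x) (hy : memL2 y) : memL2 (x + y) := by
  rw [memL2_iff] at *; exact hx.add hy

lemma memL2_sub {x y : RSeq} (hx : memL2 x) (hy : memL2 y) : memL2 (x - y) := by
  rw [sub_eq_add_neg]; exact memL2_add hx (memL2_neg hy)

lemma l2norm_neg (x : RSeq) : l2norm (-x) = l2norm x := by
  unfold l2norm; simp [neg_sq]

lemma l2norm_add_le {x y : RSeq} (hx : memL2 x) (hy : memL2 y) :
    l2norm (x + y) ≤ l2norm x + l2norm y := by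
  rw [l2norm_eq hx, l2norm_eq hy, l2norm_eq (memL2_add hx hy)]
  have : (⟨x + y, memL2_iff.mp (memL2_add hx hy)⟩ : lp (fun _ : ℕ => ℝ) 2)
      = (⟨x, memL2_iff.mp hx⟩ : lp (fun _ : ℕ => ℝ) 2) + ⟨y, memL2_iff.mp hy⟩ := rfl
  rw [this]
  exact norm_add_le _ _

lemma l2norm_zero' : l2norm 0 = 0 := by unfold l2norm; simp

/-- If the matrix operator is bounded on Z₂ and γ restricts to a bounded
operator on ℓ², then δ is bounded from ℓ_f* to ℓ², and consequently δ∘KP is bounded on ℓ². -/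
theorem stmt_6 (α β δ γ : RSeq →ₗ[ℝ] RSeq)
    (hT : BoundedOnZ2 (matOp α β δ γ))
    (hγ : ∃ K : ℝ, ∀ y : RSeq, memL2 y → memL2 (γ y) ∧ l2norm (γ y) ≤ K * l2norm y) :
    ∃ C > (0 : ℝ),
      (∀ ω : RSeq, memLfStar ω → memL2 (δ ω) ∧ l2norm (δ ω) ≤ C * lfStarNorm ω) ∧
      (∀ y : RSeq, memL2 y → memL2 (δ (KP y)) ∧ l2norm (δ (KP y)) ≤ C * l2norm y) := by
  obtain ⟨hTmem, C, hC⟩ := hT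
  obtain ⟨K, hK⟩ := hγ
  set C' : ℝ := max C 0 + max K 0 + 1 with hC'def
  have hC'pos : 0 < C' := by positivity
  -- key estimate
  have key : ∀ ω x : RSeq, memL2 x → memL2 (ω - KP x) →
      memL2 (δ ω) ∧ l2norm (δ ω) ≤ C' * (l2norm (ω - KP x) + l2norm x) := by
    intro ω x hx hωx
    have hu : memZ2 (ω, x) := ⟨hx, hωx⟩
    have hTu : memZ2 (matOp α β δ γ (ω, x)) := hTmem _ hu
    have h1 : memL2 (δ ω + γ x) := hTu.1
    have hγx := hK x hx
    have hδm : memL2 (δ ω) := by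
      have := memL2_sub h1 hγx.1
      simpa using this
    refine ⟨hδm, ?_⟩
    have heq : (δ ω + γ x) + (-(γ x)) = δ ω := by ring
    have htri : l2norm (δ ω) ≤ l2norm (δ ω + γ x) + l2norm (γ x) := by
      calc l2norm (δ ω) = l2norm ((δ ω + γ x) + (-(γ x))) := by rw [heq]
        _
          ≤ l2norm (δ ω + γ x) + l2norm (-(γ x)) :=
            l2norm_add_le h1 (memL2_neg hγx.1)
        _ = l2norm (δ ω + γ x) + l2norm (γ x) := by rw [l2norm_neg]
    have hZ : l2norm (δ ω + γ x) ≤ Z2norm (matOp α β δ γ (ω, x)) := by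
      unfold Z2norm
      exact le_add_of_nonneg_left (l2norm_nonneg _)
    have hCb : Z2norm (matOp α β δ γ (ω, x)) ≤ C * Z2norm (ω, x) := hC _ hu
    have hZu : Z2norm (ω, x) = l2norm (ω - KP x) + l2norm x := rfl
    set r : ℝ := l2norm (ω - KP x) + l2norm x with hr
    have hr0 : 0 ≤ r := add_nonneg (l2norm_nonneg _) (l2norm_nonneg _)
    have hxr : l2norm x ≤ r := le_add_of_nonneg_left (l2norm_nonneg _)
    have h2 : l2norm (δ ω + γ x) ≤ max C 0 * r := by
      calc l2norm (δ ω + γ x) ≤ C * Z2norm (ω, x) := hZ.trans hCb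
        _ = C * r := by rw [hZu]
        _ ≤ max C 0 * r := mul_le_mul_of_nonneg_right (le_max_left _ _) hr0
    have h3 : l2norm (γ x) ≤ max K 0 * r := by
      calc l2norm (γ x) ≤ K * l2norm x := hγx.2
        _ ≤ max K 0 * l2norm x :=
            mul_le_mul_of_nonneg_right (le_max_left _ _) (l2norm_nonneg _)
        _ ≤ max K 0 * r := mul_le_mul_of_nonneg_left hxr (le_max_right _ _)
    have := htri.trans (add_le_add h2 h3)
    nlinarith [l2norm_nonneg (δ ω)]
  refine ⟨C', hC'pos, ?_, ?_⟩
  · intro ω hω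
    obtain ⟨x₀, hx₀, hωx₀⟩ := hω
    refine ⟨(key ω x₀ hx₀ hωx₀).1, ?_⟩
    have hne : ∃ r, r ∈ {r : ℝ | ∃ x : RSeq, memL2 x ∧ memL2 (ω - KP x) ∧
        r = l2norm (ω - KP x) + l2norm x} :=
      ⟨_, x₀, hx₀, hωx₀, rfl⟩
    have hlb : l2norm (δ ω) / C' ≤ lfStarNorm ω := by
      unfold lfStarNorm
      refine le_csInf hne ?_
      rintro r ⟨x, hx, hωx, rfl⟩
      rw [div_le_iff₀ hC'pos]
      calc l2norm (δ ω) ≤ C' * (l2norm (ω - KP x) + l2norm x) := (key ω x hx hωx).2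
        _ = (l2norm (ω - KP x) + l2norm x) * C' := mul_comm _ _
    calc l2norm (δ ω) = (l2norm (δ ω) / C') * C' := by field_simp
      _ ≤ lfStarNorm ω * C' := mul_le_mul_of_nonneg_right hlb hC'pos.le
      _ = C' * lfStarNorm ω := mul_comm _ _
  · intro y hy
    have hz : memL2 (KP y - KP y) := by
      rw [sub_self]
      exact summable_zero.congr (by intro n; simp)
    have hmem : memLfStar (KP y) := ⟨y, hy, hz⟩
    refine ⟨(key (KP y) y hy hz).1, ?_⟩
    have hle : lfStarNorm (KP y) ≤ l2norm y := by
      unfold lfStarNorm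
      refine csInf_le ⟨0, ?_⟩ ?_
      · rintro r ⟨x, _, _, rfl⟩
        exact add_nonneg (l2norm_nonneg _) (l2norm_nonneg _)
      · refine ⟨y, hy, hz, ?_⟩
        rw [sub_self, l2norm_zero', zero_add]
    calc l2norm (δ (KP y)) ≤ C' * (l2norm (KP y - KP y) + l2norm y) :=
          (key (KP y) y hy hz).2
      _ = C' * l2norm y := by rw [sub_self, l2norm_zero', zero_add]
      _ ≤ C' * l2norm y := le_refl _
end
end
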